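/- For every metric space (S,ρ), every sequence x : ℕ → S, all integers m, k, n ≥ 1 and every real r ≥ 0, the k-recurrence rate satisfies RR^m_k(x,n,r) = k·C^m_k(x,n,r) − (k − 1)·C^m_{k+1}(x,n,r). -/
import Mathlib


open Filter Topology MeasureTheory

/-- `dmax h x y = max_{0 ≤ l < h} dist (x l) (y l)` (equals 0 if `h = 0`). -/
noncomputable def dmax {S : Type*} [MetricSpace S] (h : ℕ) (x y : ℕ → S) : ℝ :=
  (((Finset.range h).sup fun l => nndist (x l) (y l) : NNReal) : ℝ)

/-- the shifted sequence `x^{(i)}`. -/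
def shift {S : Type*} (i : ℕ) (x : ℕ → S) : ℕ → S := fun l => x (i + l)

/-- `(i,j)` is an `r`-recurrence in the `m`'th embedding of the trajectory of `x`. -/
def isRec {S : Type*} [MetricSpace S] (m : ℕ) (x : ℕ → S) (r : ℝ) (i j : ℕ) : Prop :=
  dmax m (shift i x) (shift j x) ≤ r

open Classical in
/-- `L^m_k(x,n,r)`: the number of diagonal lines of length `k`
in the `n × n` recurrence plot. -/
noncomputable def Lcount {S : Type*} [MetricSpace S] (m k : ℕ) (x : ℕ → S) (n : ℕ)
    (r : ℝ) : ℕ :=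
  ((Finset.range (n + 1) ×ˢ Finset.range (n + 1)).filter fun p =>
    p.1 + k ≤ n ∧ p.2 + k ≤ n ∧
    (∀ h < k, isRec m x r (p.1 + h) (p.2 + h)) ∧
    (p.1 = 0 ∨ p.2 = 0 ∨ ¬ isRec m x r (p.1 - 1) (p.2 - 1)) ∧
    (p.1 + k = n ∨ p.2 + k = n ∨ ¬ isRec m x r (p.1 + k) (p.2 + k))).card

open Classical in
/-- `n² · C^m_k(x,n,r)`: the number of pairs `(i,j)`, `0 ≤ i,j ≤ n-k`, with
`d^m_k(x^{(i)}, x^{(j)}) ≤ r`. -/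
noncomputable def Ccount {S : Type*} [MetricSpace S] (m k : ℕ) (x : ℕ → S) (n : ℕ)
    (r : ℝ) : ℕ :=
  ((Finset.range (n + 1) ×ˢ Finset.range (n + 1)).filter fun p =>
    p.1 + k ≤ n ∧ p.2 + k ≤ n ∧
    dmax (m + k - 1) (shift p.1 x) (shift p.2 x) ≤ r).card

/-- The correlation sum `C^m_k(x,n,r)`. -/
noncomputable def Csum {S : Type*} [MetricSpace S] (m k : ℕ) (x : ℕ → S) (n : ℕ)
    (r : ℝ) : ℝ :=
  (Ccount m k x n r : ℝ) / (n : ℝ) ^ 2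

/-- The `k`-recurrence rate `RR^m_k(x,n,r) = (1/n²) Σ_{l ≥ k} l · L^m_l(x,n,r)`. -/
noncomputable def RRsum {S : Type*} [MetricSpace S] (m k : ℕ) (x : ℕ → S) (n : ℕ)
    (r : ℝ) : ℝ :=
  (1 / (n : ℝ) ^ 2) * ∑' l : ℕ, if k ≤ l then (l : ℝ) * (Lcount m l x n r : ℝ) else 0

section Aux

variable {S : Type*} [MetricSpace S]

lemma dmax_le_iff {h : ℕ} {x y : ℕ → S} {r : ℝ} (hr : 0 ≤ r) :
    dmax h x y ≤ r ↔ ∀ l < h, dist (x l) (y l) ≤ r := by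
  unfold dmax
  constructor
  · intro H l hl
    calc dist (x l) (y l) = ((nndist (x l) (y l) : NNReal) : ℝ) := dist_nndist _ _
      _ ≤ (((Finset.range h).sup fun l => nndist (x l) (y l) : NNReal) : ℝ) :=
          NNReal.coe_le_coe.2
            (Finset.le_sup (f := fun l => nndist (x l) (y l)) (Finset.mem_range.2 hl))
      _ ≤ r := H
  · intro H
    rw [← Real.coe_toNNReal r hr, NNReal.coe_le_coe, Finset.sup_le_iff]
    intro l hl
    rw [← NNReal.coe_le_coe, coe_nndist, Real.coe_toNNReal r hr]
    exact H l (Finset.mem_range.1 hl)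

lemma isRec_iff {m : ℕ} {x : ℕ → S} {r : ℝ} (hr : 0 ≤ r) {i j : ℕ} :
    isRec m x r i j ↔ ∀ l < m, dist (x (i + l)) (x (j + l)) ≤ r := by
  unfold isRec shift
  exact dmax_le_iff hr

lemma run_iff {m j : ℕ} {x : ℕ → S} {r : ℝ} (hm : 1 ≤ m) (hj : 1 ≤ j) (hr : 0 ≤ r)
    {i i' : ℕ} :
    dmax (m + j - 1) (shift i x) (shift i' x) ≤ r ↔
      ∀ h < j, isRec m x r (i + h) (i' + h) := by
  rw [dmax_le_iff hr]
  simp only [shift]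
  constructor
  · intro H h hh
    rw [isRec_iff hr]
    intro l hl
    have e1 : i + h + l = i + (h + l) := by ring
    have e2 : i' + h + l = i' + (h + l) := by ring
    rw [e1, e2]
    exact H (h + l) (by omega)
  · intro H t ht
    have hh : min t (j - 1) < j := by omega
    have := (isRec_iff hr).1 (H _ hh) (t - min t (j - 1)) (by omega)
    have e1 : i + min t (j - 1) + (t - min t (j - 1)) = i + t := by omega
    have e2 : i' + min t (j - 1) + (t - min t (j - 1)) = i' + t := by omega
    rwa [e1, e2] at this

/-- The predicate "`p` begins a diagonal line of length `l`". -/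
def LineProp (m : ℕ) (x : ℕ → S) (n : ℕ) (r : ℝ) (l : ℕ) (p : ℕ × ℕ) : Prop :=
  p.1 + l ≤ n ∧ p.2 + l ≤ n ∧
  (∀ h < l, isRec m x r (p.1 + h) (p.2 + h)) ∧
  (p.1 = 0 ∨ p.2 = 0 ∨ ¬ isRec m x r (p.1 - 1) (p.2 - 1)) ∧
  (p.1 + l = n ∨ p.2 + l = n ∨ ¬ isRec m x r (p.1 + l) (p.2 + l))

open Classical in
lemma Lcount_eq (m l : ℕ) (x : ℕ → S) (n : ℕ) (r : ℝ) :
    Lcount m l x n r =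
      ((Finset.range (n + 1) ×ˢ Finset.range (n + 1)).filter (LineProp m x n r l)).card := by
  classical
  unfold Lcount
  exact congrArg Finset.card (Finset.filter_congr fun p _ => Iff.rfl)

lemma Lcount_eq_zero {m l : ℕ} (x : ℕ → S) (n : ℕ) (r : ℝ) (h : n < l) :
    Lcount m l x n r = 0 := by
  classical
  unfold Lcount
  rw [Finset.card_eq_zero, Finset.filter_eq_empty_iff]
  intro p _
  intro hp
  exact absurd hp.1 (by omega)

/-- every point beginning a run of `j` recurrences lies at a unique offset inside a
unique maximal diagonal line. -/
lemma exists_unique_line {m j n : ℕ} {x : ℕ → S} {r : ℝ} (hj : 1 ≤ j)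
    {i i' : ℕ} (h1 : i + j ≤ n) (h2 : i' + j ≤ n)
    (hrun : ∀ h < j, isRec m x r (i + h) (i' + h)) :
    ∃! tl : ℕ × ℕ, tl.1 + j ≤ tl.2 ∧ tl.1 ≤ i ∧ tl.1 ≤ i' ∧
      LineProp m x n r tl.2 (i - tl.1, i' - tl.1) := by
  classical
  have hPex : ∃ t, i - t = 0 ∨ i' - t = 0 ∨ ¬ isRec m x r (i - t - 1) (i' - t - 1) :=
    ⟨i, Or.inl (Nat.sub_self i)⟩
  obtain ⟨b, hbspec, hbmin'⟩ :
      ∃ b, (i - b = 0 ∨ i' - b = 0 ∨ ¬ isRec m x r (i - b - 1) (i' - b - 1)) ∧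
        ∀ s < b, ¬ (i - s = 0 ∨ i' - s = 0 ∨ ¬ isRec m x r (i - s - 1) (i' - s - 1)) :=
    ⟨Nat.find hPex, Nat.find_spec hPex, fun s hs => Nat.find_min hPex hs⟩
  have hbmin : ∀ s < b, i - s ≠ 0 ∧ i' - s ≠ 0 ∧ isRec m x r (i - s - 1) (i' - s - 1) := by
    intro s hs
    have := hbmin' s hs
    push_neg at this
    exact this
  have hble : ∀ t, (i - t = 0 ∨ i' - t = 0 ∨ ¬ isRec m x r (i - t - 1) (i' - t - 1)) →
      b ≤ t := by
    intro t h
    by_contra hc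
    exact hbmin' t (by omega) h
  have hbi : b ≤ i := hble i (Or.inl (Nat.sub_self i))
  have hbi' : b ≤ i' := hble i' (Or.inr (Or.inl (Nat.sub_self i')))
  have hQex : ∃ u, i + j + u = n ∨ i' + j + u = n ∨ ¬ isRec m x r (i + j + u) (i' + j + u) :=
    ⟨n - i - j, Or.inl (by omega)⟩
  obtain ⟨f, hfspec, hfmin'⟩ :
      ∃ f, (i + j + f = n ∨ i' + j + f = n ∨ ¬ isRec m x r (i + j + f) (i' + j + f)) ∧
        ∀ u < f, ¬ (i + j + u = n ∨ i' + j + u = n ∨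
          ¬ isRec m x r (i + j + u) (i' + j + u)) :=
    ⟨Nat.find hQex, Nat.find_spec hQex, fun u hu => Nat.find_min hQex hu⟩
  have hfmin : ∀ u < f, i + j + u ≠ n ∧ i' + j + u ≠ n ∧
      isRec m x r (i + j + u) (i' + j + u) := by
    intro u hu
    have := hfmin' u hu
    push_neg at this
    exact this
  have hfle : ∀ u, (i + j + u = n ∨ i' + j + u = n ∨
      ¬ isRec m x r (i + j + u) (i' + j + u)) → f ≤ u := by
    intro u h
    by_contra hc
    exact hfmin' u (by omega) h
  have hfi : f ≤ n - i - j := hfle _ (Or.inl (by omega))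
  have hfi' : f ≤ n - i' - j := hfle _ (Or.inr (Or.inl (by omega)))
  refine ⟨(b, b + j + f), ⟨by omega, hbi, hbi', ?_, ?_, ?_, ?_, ?_⟩, ?_⟩
  · show i - b + (b + j + f) ≤ n
    omega
  · show i' - b + (b + j + f) ≤ n
    omega
  · intro h hh
    rcases lt_or_ge h b with hcase | hcase
    · obtain ⟨-, -, hrec⟩ := hbmin (b - h - 1) (by omega)
      have e1 : i - (b - h - 1) - 1 = i - b + h := by omega
      have e2 : i' - (b - h - 1) - 1 = i' - b + h := by omega
      rwa [e1, e2] at hrec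
    · rcases lt_or_ge h (b + j) with hc2 | hc2
      · have hrec := hrun (h - b) (by omega)
        have e1 : i + (h - b) = i - b + h := by omega
        have e2 : i' + (h - b) = i' - b + h := by omega
        rwa [e1, e2] at hrec
      · obtain ⟨-, -, hrec⟩ := hfmin (h - b - j) (by omega)
        have e1 : i + j + (h - b - j) = i - b + h := by omega
        have e2 : i' + j + (h - b - j) = i' - b + h := by omega
        rwa [e1, e2] at hrec
  · rcases hbspec with h | h | h
    · exact Or.inl h
    · exact Or.inr (Or.inl h)
    · exact Or.inr (Or.inr h)
  · rcases hfspec with h | h | h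
    · exact Or.inl (by omega)
    · exact Or.inr (Or.inl (by omega))
    · refine Or.inr (Or.inr ?_)
      have e1 : i - b + (b + j + f) = i + j + f := by omega
      have e2 : i' - b + (b + j + f) = i' + j + f := by omega
      rw [e1, e2]
      exact h
  · rintro ⟨t, l⟩ ⟨htl, hti, hti', hline⟩
    obtain ⟨hl1, hl2, hrunL, hback, hfwd⟩ := hline
    simp only at hl1 hl2 hrunL hback hfwd
    -- t = b
    have hPt : i - t = 0 ∨ i' - t = 0 ∨ ¬ isRec m x r (i - t - 1) (i' - t - 1) := by
      rcases hback with h | h | h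
      · exact Or.inl h
      · exact Or.inr (Or.inl h)
      · exact Or.inr (Or.inr h)
    have hbt : b ≤ t := hble t hPt
    have htb : t ≤ b := by
      by_contra hc
      push_neg at hc
      rcases hbspec with h | h | h
      · omega
      · omega
      · apply h
        have hrec := hrunL (t - b - 1) (by omega)
        have e1 : i - t + (t - b - 1) = i - b - 1 := by omega
        have e2 : i' - t + (t - b - 1) = i' - b - 1 := by omega
        rwa [e1, e2] at hrec
    have ht : t = b := le_antisymm htb hbt
    -- l = t + j + f
    have hQl : i + j + (l - j - t) = n ∨ i' + j + (l - j - t) = n ∨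
        ¬ isRec m x r (i + j + (l - j - t)) (i' + j + (l - j - t)) := by
      rcases hfwd with h | h | h
      · exact Or.inl (by omega)
      · exact Or.inr (Or.inl (by omega))
      · refine Or.inr (Or.inr ?_)
        have e1 : i + j + (l - j - t) = i - t + l := by omega
        have e2 : i' + j + (l - j - t) = i' - t + l := by omega
        rw [e1, e2]
        exact h
    have hfl : f ≤ l - j - t := hfle _ hQl
    have hlf : l - j - t ≤ f := by
      by_contra hc
      push_neg at hc
      rcases hfspec with h | h | h
      · omega
      · omega
      · apply h
        have hrec := hrunL (t + j + f) (by omega)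
        have e1 : i - t + (t + j + f) = i + j + f := by omega
        have e2 : i' - t + (t + j + f) = i' + j + f := by omega
        rwa [e1, e2] at hrec
    rw [Prod.mk.injEq]
    exact ⟨ht, by omega⟩

open Classical in
lemma Ccount_eq_sum {m j n : ℕ} (x : ℕ → S) (r : ℝ) (hm : 1 ≤ m) (hj : 1 ≤ j)
    (hr : 0 ≤ r) :
    Ccount m j x n r = ∑ l ∈ Finset.range (n + 1), (l + 1 - j) * Lcount m l x n r := by
  classical
  have hC : Ccount m j x n r =
      ((Finset.range (n + 1) ×ˢ Finset.range (n + 1)).filter fun p =>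
        p.1 + j ≤ n ∧ p.2 + j ≤ n ∧ ∀ h < j, isRec m x r (p.1 + h) (p.2 + h)).card := by
    unfold Ccount
    congr 1
    apply Finset.filter_congr
    intro p _
    exact and_congr_right fun _ => and_congr_right fun _ => run_iff hm hj hr
  rw [hC]
  have hTcard :
      ((Finset.range (n + 1)).sigma fun l =>
        ((Finset.range (n + 1) ×ˢ Finset.range (n + 1)).filter (LineProp m x n r l)) ×ˢ
          Finset.range (l + 1 - j)).card
      = ∑ l ∈ Finset.range (n + 1), (l + 1 - j) * Lcount m l x n r := by
    rw [Finset.card_sigma]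
    refine Finset.sum_congr rfl fun l _ => ?_
    rw [Finset.card_product, Finset.card_range, Lcount_eq, mul_comm]
  rw [← hTcard]
  symm
  apply Finset.card_bij (fun s _ => (s.2.1.1 + s.2.2, s.2.1.2 + s.2.2))
  · rintro ⟨l, ⟨⟨p, q⟩, t⟩⟩ hs
    simp only [Finset.mem_sigma, Finset.mem_product, Finset.mem_filter,
      Finset.mem_range] at hs ⊢
    obtain ⟨hl, ⟨⟨hpq, hlp⟩, htr⟩⟩ := hs
    obtain ⟨hp1, hp2, hrunp, -, -⟩ := hlp
    simp only at hp1 hp2 hrunp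
    have htj : t + j ≤ l := by omega
    refine ⟨⟨by omega, by omega⟩, by omega, by omega, ?_⟩
    intro h hh
    have hrec := hrunp (t + h) (by omega)
    have e1 : p + (t + h) = p + t + h := by ring
    have e2 : q + (t + h) = q + t + h := by ring
    rwa [e1, e2] at hrec
  · rintro ⟨l1, ⟨⟨p1, q1⟩, t1⟩⟩ hs1 ⟨l2, ⟨⟨p2, q2⟩, t2⟩⟩ hs2 heq
    simp only [Finset.mem_sigma, Finset.mem_product, Finset.mem_filter,
      Finset.mem_range] at hs1 hs2
    obtain ⟨hl1r, ⟨⟨hpq1, hlp1⟩, htr1⟩⟩ := hs1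
    obtain ⟨hl2r, ⟨⟨hpq2, hlp2⟩, htr2⟩⟩ := hs2
    have heq1 : p1 + t1 = p2 + t2 := congrArg Prod.fst heq
    have heq2 : q1 + t1 = q2 + t2 := congrArg Prod.snd heq
    set i := p1 + t1 with hi
    set i' := q1 + t1 with hi'
    have hij : i + j ≤ n := by
      obtain ⟨hp1, -, -, -, -⟩ := hlp1
      simp only at hp1
      omega
    have hij' : i' + j ≤ n := by
      obtain ⟨-, hp2', -, -, -⟩ := hlp1
      simp only at hp2'
      omega
    have hruni : ∀ h < j, isRec m x r (i + h) (i' + h) := by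
      obtain ⟨-, -, hrunp, -, -⟩ := hlp1
      simp only at hrunp
      intro h hh
      have hrec := hrunp (t1 + h) (by omega)
      have e1 : p1 + (t1 + h) = i + h := by omega
      have e2 : q1 + (t1 + h) = i' + h := by omega
      rwa [e1, e2] at hrec
    obtain ⟨w, -, huniq⟩ := exists_unique_line hj hij hij' hruni
    have key1 : (t1, l1) = w := by
      apply huniq
      refine ⟨by omega, by omega, by omega, ?_⟩
      have e1 : i - t1 = p1 := by omega
      have e2 : i' - t1 = q1 := by omega
      simp only [e1, e2]
      exact hlp1
    have key2 : (t2, l2) = w := by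
      apply huniq
      refine ⟨by omega, by omega, by omega, ?_⟩
      have e1 : i - t2 = p2 := by omega
      have e2 : i' - t2 = q2 := by omega
      simp only [e1, e2]
      exact hlp2
    have hk : (t1, l1) = (t2, l2) := key1.trans key2.symm
    have ht : t1 = t2 := congrArg Prod.fst hk
    have hl : l1 = l2 := congrArg Prod.snd hk
    have hp : p1 = p2 := by omega
    have hq : q1 = q2 := by omega
    subst ht hl hp hq
    rfl
  · rintro ⟨i, i'⟩ hb
    simp only [Finset.mem_filter, Finset.mem_product, Finset.mem_range] at hb
    obtain ⟨⟨-, -⟩, hij, hij', hruni⟩ := hb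
    obtain ⟨⟨t, l⟩, ⟨htl, hti, hti', hlp⟩, -⟩ := exists_unique_line hj hij hij' hruni
    have hL1 : i - t + l ≤ n := hlp.1
    have hL2 : i' - t + l ≤ n := hlp.2.1
    refine ⟨⟨l, ⟨⟨i - t, i' - t⟩, t⟩⟩, ?_, ?_⟩
    · simp only [Finset.mem_sigma, Finset.mem_product, Finset.mem_filter,
        Finset.mem_range]
      exact ⟨by omega, ⟨⟨⟨by omega, by omega⟩, hlp⟩, by omega⟩⟩
    · simp only
      have e1 : i - t + t = i := by omega
      have e2 : i' - t + t = i' := by omega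
      rw [e1, e2]

end Aux

/-- For every metric space `(S,ρ)`, every sequence `x : ℕ → S`,
all integers `m, k, n ≥ 1` and every real `r ≥ 0`, the `k`-recurrence rate satisfies
`RR^m_k(x,n,r) = k · C^m_k(x,n,r) − (k − 1) · C^m_{k+1}(x,n,r)`. -/
theorem recurrenceRate_eq_corrSums {S : Type*} [MetricSpace S] (x : ℕ → S) (m k n : ℕ)
    (hm : 1 ≤ m) (hk : 1 ≤ k) (hn : 1 ≤ n) (r : ℝ) (hr : 0 ≤ r) :
    RRsum m k x n r =
      (k : ℝ) * Csum m k x n r - ((k : ℝ) - 1) * Csum m (k + 1) x n r := by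
  have hCk := Ccount_eq_sum (m := m) (j := k) (n := n) x r hm hk hr
  have hCk1 := Ccount_eq_sum (m := m) (j := k + 1) (n := n) x r hm (by omega) hr
  have hCkR : ((Ccount m k x n r : ℕ) : ℝ) =
      ∑ l ∈ Finset.range (n + 1), ((l + 1 - k : ℕ) : ℝ) * (Lcount m l x n r : ℝ) := by
    exact_mod_cast congrArg (Nat.cast : ℕ → ℝ) hCk
  have hCk1R : ((Ccount m (k + 1) x n r : ℕ) : ℝ) =
      ∑ l ∈ Finset.range (n + 1), ((l + 1 - (k + 1) : ℕ) : ℝ) * (Lcount m l x n r : ℝ) := by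
    exact_mod_cast congrArg (Nat.cast : ℕ → ℝ) hCk1
  have key : (∑ l ∈ Finset.range (n + 1),
        if k ≤ l then (l : ℝ) * (Lcount m l x n r : ℝ) else 0)
      = (k : ℝ) * (Ccount m k x n r : ℝ) -
        ((k : ℝ) - 1) * (Ccount m (k + 1) x n r : ℝ) := by
    rw [hCkR, hCk1R, Finset.mul_sum, Finset.mul_sum, ← Finset.sum_sub_distrib]
    refine Finset.sum_congr rfl fun l _ => ?_
    rcases le_or_gt k l with h | h
    · rw [if_pos h, Nat.cast_sub (by omega : k ≤ l + 1),
        Nat.cast_sub (by omega : k + 1 ≤ l + 1)]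
      push_cast
      ring
    · rw [if_neg (by omega), show l + 1 - k = 0 by omega,
        show l + 1 - (k + 1) = 0 by omega]
      norm_num
  have htsum : (∑' l : ℕ, if k ≤ l then (l : ℝ) * (Lcount m l x n r : ℝ) else 0)
      = ∑ l ∈ Finset.range (n + 1),
          if k ≤ l then (l : ℝ) * (Lcount m l x n r : ℝ) else 0 := by
    apply tsum_eq_sum
    intro l hl
    rw [Finset.mem_range] at hl
    rw [Lcount_eq_zero x n r (by omega)]
    simp
  have hn0 : (n : ℝ) ≠ 0 := by positivity
  unfold RRsum Csum
  rw [htsum, key]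
  field_simp
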